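/- Let (C, E, s) be a skeletally small extriangulated category, and let (T, ε) and (R, η) be contravariant right δ-functors on C such that the functors R^i are weakly effaceable for all i > 0 and the connected sequences are exact on all s-triangles. Then every morphism of functors R^0 → T^0 extends uniquely to a morphism of right δ-functors (R, η) → (T, ε). -/

import Mathlib

open CategoryTheory CategoryTheory.Limits Opposite

universe v u

/-- An extriangulated category in the sense of Nakaoka–Palu: an additive category `C`
together with a biadditive functor `E : Cᵒᵖ ⥤ C ⥤ Ab` and a realization of extensions
satisfying the Nakaoka–Palu axioms. `real δ x y` means that the sequence
`A --x--> B --y--> Z` belongs to the equivalence class `s δ`, for `δ ∈ E(Z, A)`. -/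
class Extriangulated (C : Type u) [Category.{v} C] [Preadditive C]
    [HasZeroObject C] [HasBinaryBiproducts C] : Type (max u (v + 1)) where
  /-- the biadditive functor of extensions; `(E.obj (op Z)).obj A` is `E(Z, A)` -/
  E : Cᵒᵖ ⥤ C ⥤ AddCommGrpCat.{v}
  /-- `E` is additive in each variable -/
  additive_obj : ∀ (Z : Cᵒᵖ), (E.obj Z).Additive
  additive_map : ∀ {Z Z' : Cᵒᵖ} (f g : Z ⟶ Z'), E.map (f + g) = E.map f + E.map g
  /-- realization predicate: `real δ x y` means `A --x--> B --y--> Z` realizes `δ` -/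
  real : ∀ {A Z : C}, ((E.obj (op Z)).obj A) → ∀ {B : C}, (A ⟶ B) → (B ⟶ Z) → Prop
  /-- every extension is realized -/
  real_exists : ∀ {A Z : C} (δ : (E.obj (op Z)).obj A),
    ∃ (B : C) (x : A ⟶ B) (y : B ⟶ Z), real δ x y
  /-- the zero extension is realized by the split sequence -/
  real_zero : ∀ (A Z : C),
    real (0 : (E.obj (op Z)).obj A) (biprod.inl : A ⟶ A ⊞ Z) (biprod.snd : A ⊞ Z ⟶ Z)
  /-- realizations are closed under isomorphisms fixing the end terms -/
  real_iso : ∀ {A Z B B' : C} (δ : (E.obj (op Z)).obj A) (x : A ⟶ B) (y : B ⟶ Z)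
    (e : B ≅ B'), real δ x y → real δ (x ≫ e.hom) (e.inv ≫ y)
  /-- realized sequences are complexes -/
  real_comp_zero : ∀ {A Z B : C} {δ : (E.obj (op Z)).obj A} {x : A ⟶ B} {y : B ⟶ Z},
    real δ x y → x ≫ y = 0
  /-- realization of morphisms of extensions: if `a_* δ = c^* δ'` then any two chosen
  realizations are connected by a morphism of sequences -/
  real_hom : ∀ {A Z A' Z' B B' : C} (δ : (E.obj (op Z)).obj A) (δ' : (E.obj (op Z')).obj A')
    (x : A ⟶ B) (y : B ⟶ Z) (x' : A' ⟶ B') (y' : B' ⟶ Z') (a : A ⟶ A') (c : Z ⟶ Z'),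
    real δ x y → real δ' x' y' →
    (E.obj (op Z)).map a δ = (E.map c.op).app A' δ' →
    ∃ b : B ⟶ B', x ≫ b = a ≫ x' ∧ y ≫ c = b ≫ y'
  /-- the axiom (ET4) -/
  et4 : ∀ {A B D F C₀ : C} (δ : (E.obj (op D)).obj A) (δ' : (E.obj (op F)).obj B)
    (f : A ⟶ B) (f' : B ⟶ D) (g : B ⟶ C₀) (g' : C₀ ⟶ F),
    real δ f f' → real δ' g g' →
    ∃ (E₀ : C) (h' : C₀ ⟶ E₀) (d : D ⟶ E₀) (e : E₀ ⟶ F)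
      (δ'' : (E.obj (op E₀)).obj A),
      real δ'' (f ≫ g) h' ∧
      real ((E.obj (op F)).map f' δ') d e ∧
      g ≫ h' = f' ≫ d ∧ h' ≫ e = g' ∧
      (E.map d.op).app A δ'' = δ ∧
      (E.obj (op E₀)).map f δ'' = (E.map e.op).app B δ'
  /-- the axiom (ET4)ᵒᵖ -/
  et4op : ∀ {A B D F C₀ : C} (δ : (E.obj (op A)).obj D) (δ' : (E.obj (op B)).obj F)
    (u : D ⟶ B) (v : B ⟶ A) (w : F ⟶ C₀) (t : C₀ ⟶ B),
    real δ u v → real δ' w t →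
    ∃ (E₀ : C) (h : E₀ ⟶ C₀) (dc : E₀ ⟶ D) (ec : F ⟶ E₀)
      (δ'' : (E.obj (op A)).obj E₀),
      real δ'' h (t ≫ v) ∧
      real ((E.map u.op).app F δ') ec dc ∧
      h ≫ t = dc ≫ u ∧ ec ≫ h = w ∧
      (E.obj (op A)).map dc δ'' = δ ∧
      (E.map v.op).app E₀ δ'' = (E.obj (op B)).map ec δ'

namespace Extriangulated

variable {C : Type u} [Category.{v} C] [Preadditive C]
  [HasZeroObject C] [HasBinaryBiproducts C] [Extriangulated C]

/-- The abelian group of `E`-extensions `E(Z, A)`. -/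
abbrev Ext (Z A : C) : Type v := ((E (C := C)).obj (op Z)).obj A

/-- Pushforward `f_* δ` of an extension along `f : A ⟶ A'`. -/
abbrev push {Z A A' : C} (f : A ⟶ A') (δ : Ext Z A) : Ext Z A' :=
  ((E (C := C)).obj (op Z)).map f δ

/-- Pullback `g^* δ` of an extension along `g : Z' ⟶ Z`. -/
abbrev pull {Z Z' A : C} (g : Z' ⟶ Z) (δ : Ext Z A) : Ext Z' A :=
  ((E (C := C)).map g.op).app A δ

/-- A deflation is a morphism appearing as the second map of an `s`-triangle. -/
def IsDeflation {B Z : C} (p : B ⟶ Z) : Prop :=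
  ∃ (A : C) (x : A ⟶ B) (δ : Ext Z A), real δ x p

/-- An inflation is a morphism appearing as the first map of an `s`-triangle. -/
def IsInflation {A B : C} (x : A ⟶ B) : Prop :=
  ∃ (Z : C) (p : B ⟶ Z) (δ : Ext Z A), real δ x p

end Extriangulated

namespace Extriangulated

variable (C : Type u) [Category.{v} C] [Preadditive C]
  [HasZeroObject C] [HasBinaryBiproducts C] [Extriangulated C]

/-- A contravariant functor `Cᵒᵖ ⥤ Ab` is weakly effaceable if every element of `F(C)`
is killed by restriction along some deflation onto `C`. -/
def WeaklyEffaceable (F : Cᵒᵖ ⥤ AddCommGrpCat.{v}) : Prop :=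
  ∀ (Z : C) (x : F.obj (op Z)), ∃ (B : C) (p : B ⟶ Z),
    IsDeflation p ∧ F.map p.op x = 0

/-- A contravariant right δ-functor on the extriangulated category `C`: a sequence of
additive functors `Cᵒᵖ ⥤ Ab` together with connecting morphisms for each `E`-extension,
natural with respect to morphisms of `E`-extensions, such that the long sequence
associated with any `s`-triangle is exact. -/
structure RightDeltaFunctor where
  /-- the sequence of functors -/
  T : ℕ → Cᵒᵖ ⥤ AddCommGrpCat.{v}
  additive : ∀ i, (T i).Additive
  /-- the connecting morphisms `ε^i_δ : T^i(A) → T^{i+1}(C)` -/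
  conn : ∀ (i : ℕ) {A Z : C}, Ext Z A → ((T i).obj (op A) →+ (T (i + 1)).obj (op Z))
  /-- naturality with respect to morphisms of `E`-extensions -/
  conn_natural : ∀ (i : ℕ) {A Z A' Z' : C} (δ : Ext Z A) (δ' : Ext Z' A')
    (a : A ⟶ A') (c : Z ⟶ Z'), push a δ = pull c δ' →
    ∀ x : (T i).obj (op A'),
      conn i δ ((T i).map a.op x) = (T (i + 1)).map c.op (conn i δ' x)
  /-- exactness at `T^i(B)` -/
  exact₁ : ∀ (i : ℕ) {A B Z : C} (δ : Ext Z A) (k : A ⟶ B) (p : B ⟶ Z),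
    real δ k p → Function.Exact ⇑((T i).map p.op) ⇑((T i).map k.op)
  /-- exactness at `T^i(A)` -/
  exact₂ : ∀ (i : ℕ) {A B Z : C} (δ : Ext Z A) (k : A ⟶ B) (p : B ⟶ Z),
    real δ k p → Function.Exact ⇑((T i).map k.op) ⇑(conn i δ)
  /-- exactness at `T^{i+1}(C)` -/
  exact₃ : ∀ (i : ℕ) {A B Z : C} (δ : Ext Z A) (k : A ⟶ B) (p : B ⟶ Z),
    real δ k p → Function.Exact ⇑(conn i δ) ⇑((T (i + 1)).map p.op)

/-- Compatibility of a family of natural transformations with the connecting morphisms,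
i.e. the condition for being a morphism of right δ-functors. -/
def IsDeltaMorphism (R T : RightDeltaFunctor C) (θ : ∀ i, R.T i ⟶ T.T i) : Prop :=
  ∀ (i : ℕ) {A Z : C} (δ : Ext Z A) (x : (R.T i).obj (op A)),
    (θ (i + 1)).app (op Z) (R.conn i δ x) = T.conn i δ ((θ i).app (op A) x)

end Extriangulated

namespace ExtProof

set_option linter.unusedSectionVars false

open Extriangulated

variable {C : Type u} [Category.{v} C] [Preadditive C]
  [HasZeroObject C] [HasBinaryBiproducts C] [Extriangulated C]

lemma push_push {Z A A' A'' : C} (f : A ⟶ A') (g : A' ⟶ A'') (δ : Ext Z A) :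
    push g (push f δ) = push (f ≫ g) δ := by
  show _ = ((E (C := C)).obj (op Z)).map (f ≫ g) δ
  rw [CategoryTheory.Functor.map_comp, CategoryTheory.comp_apply]

lemma push_id {Z A : C} (δ : Ext Z A) : push (𝟙 A) δ = δ := by
  show ((E (C := C)).obj (op Z)).map (𝟙 A) δ = δ
  rw [CategoryTheory.Functor.map_id, CategoryTheory.id_apply]

lemma push_zero {Z A A' : C} (δ : Ext Z A) : push (0 : A ⟶ A') δ = (0 : Ext Z A') := by
  haveI := Extriangulated.additive_obj (C := C) (op Z)
  show ((E (C := C)).obj (op Z)).map (0 : A ⟶ A') δ = 0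
  rw [CategoryTheory.Functor.map_zero]
  rfl

end ExtProof

namespace ExtProof2

set_option linter.unusedSectionVars false
open Extriangulated ExtProof

variable {C : Type u} [Category.{v} C] [Preadditive C]
  [HasZeroObject C] [HasBinaryBiproducts C] [Extriangulated C]

lemma push_add {Z A A' : C} (f : A ⟶ A') (x y : Ext Z A) :
    push f (x + y) = push f x + push f y :=
  (((E (C := C)).obj (op Z)).map f).hom.map_add x y

/-- the auxiliary "external direct sum pulled back along the diagonal" extension -/
noncomputable def gam {Z A A' : C} (δ : Ext Z A) (δ' : Ext Z A') : Ext Z (A ⊞ A') :=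
  pull (biprod.lift (𝟙 Z) (𝟙 Z))
    (push (biprod.inl : A ⟶ A ⊞ A') (pull (biprod.fst : Z ⊞ Z ⟶ Z) δ) +
     push (biprod.inr : A' ⟶ A ⊞ A') (pull (biprod.snd : Z ⊞ Z ⟶ Z) δ'))

lemma push_fst_gam0 {Z A A' : C} (δ : Ext Z A) (δ' : Ext Z A') :
    push (biprod.fst : A ⊞ A' ⟶ A)
      (push (biprod.inl : A ⟶ A ⊞ A') (pull (biprod.fst : Z ⊞ Z ⟶ Z) δ) +
       push (biprod.inr : A' ⟶ A ⊞ A') (pull (biprod.snd : Z ⊞ Z ⟶ Z) δ')) =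
    pull (biprod.fst : Z ⊞ Z ⟶ Z) δ := by
  rw [push_add, push_push, push_push, biprod.inl_fst, biprod.inr_fst, push_id, push_zero, add_zero]

lemma push_snd_gam0 {Z A A' : C} (δ : Ext Z A) (δ' : Ext Z A') :
    push (biprod.snd : A ⊞ A' ⟶ A')
      (push (biprod.inl : A ⟶ A ⊞ A') (pull (biprod.fst : Z ⊞ Z ⟶ Z) δ) +
       push (biprod.inr : A' ⟶ A ⊞ A') (pull (biprod.snd : Z ⊞ Z ⟶ Z) δ')) =
    pull (biprod.snd : Z ⊞ Z ⟶ Z) δ' := by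
  rw [push_add, push_push, push_push, biprod.inl_snd, biprod.inr_snd, push_id, push_zero, zero_add]


lemma conn_gam (S : RightDeltaFunctor C) (i : ℕ) {Z A A' : C}
    (δ : Ext Z A) (δ' : Ext Z A')
    (y : (S.T i).obj (op A)) (y' : (S.T i).obj (op A')) :
    S.conn i (gam δ δ')
      ((S.T i).map (biprod.fst : A ⊞ A' ⟶ A).op y +
       (S.T i).map (biprod.snd : A ⊞ A' ⟶ A').op y') =
    S.conn i δ y + S.conn i δ' y' := by
  set γ0 : Ext (Z ⊞ Z) (A ⊞ A') :=
    push (biprod.inl : A ⟶ A ⊞ A') (pull (biprod.fst : Z ⊞ Z ⟶ Z) δ) +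
    push (biprod.inr : A' ⟶ A ⊞ A') (pull (biprod.snd : Z ⊞ Z ⟶ Z) δ') with hγ0
  have hdiag : push (𝟙 (A ⊞ A')) (gam δ δ') = pull (biprod.lift (𝟙 Z) (𝟙 Z)) γ0 := by
    rw [push_id]; rfl
  have h1 : ∀ u : (S.T i).obj (op (A ⊞ A')),
      S.conn i (gam δ δ') u
        = (S.T (i+1)).map (biprod.lift (𝟙 Z) (𝟙 Z)).op (S.conn i γ0 u) := by
    intro u
    have h := S.conn_natural i (gam δ δ') γ0 (𝟙 (A ⊞ A')) (biprod.lift (𝟙 Z) (𝟙 Z)) hdiag u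
    simpa using h
  have hf : ∀ w, S.conn i γ0 ((S.T i).map (biprod.fst : A ⊞ A' ⟶ A).op w)
      = (S.T (i+1)).map (biprod.fst : Z ⊞ Z ⟶ Z).op (S.conn i δ w) :=
    fun w => S.conn_natural i γ0 δ _ _ (push_fst_gam0 δ δ') w
  have hs : ∀ w, S.conn i γ0 ((S.T i).map (biprod.snd : A ⊞ A' ⟶ A').op w)
      = (S.T (i+1)).map (biprod.snd : Z ⊞ Z ⟶ Z).op (S.conn i δ' w) :=
    fun w => S.conn_natural i γ0 δ' _ _ (push_snd_gam0 δ δ') w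
  have c1 : ∀ w, (S.T (i+1)).map (biprod.lift (𝟙 Z) (𝟙 Z)).op
      ((S.T (i+1)).map (biprod.fst : Z ⊞ Z ⟶ Z).op w) = w := by
    intro w
    rw [← CategoryTheory.comp_apply, ← CategoryTheory.Functor.map_comp, ← op_comp,
      biprod.lift_fst, op_id, CategoryTheory.Functor.map_id, CategoryTheory.id_apply]
  have c2 : ∀ w, (S.T (i+1)).map (biprod.lift (𝟙 Z) (𝟙 Z)).op
      ((S.T (i+1)).map (biprod.snd : Z ⊞ Z ⟶ Z).op w) = w := by
    intro w
    rw [← CategoryTheory.comp_apply, ← CategoryTheory.Functor.map_comp, ← op_comp,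
      biprod.lift_snd, op_id, CategoryTheory.Functor.map_id, CategoryTheory.id_apply]
  rw [h1, (S.conn i γ0).map_add, hf y, hs y',
    ((S.T (i+1)).map (biprod.lift (𝟙 Z) (𝟙 Z)).op).hom.map_add, c1, c2]


lemma nat_apply {F G : Cᵒᵖ ⥤ AddCommGrpCat.{v}} (θ : F ⟶ G) {X Y : Cᵒᵖ} (f : X ⟶ Y)
    (x : F.obj X) : θ.app Y (F.map f x) = G.map f (θ.app X x) := by
  have h := ConcreteCategory.congr_hom (θ.naturality f) x
  rw [CategoryTheory.comp_apply, CategoryTheory.comp_apply] at h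
  exact h

lemma key (T R : RightDeltaFunctor C) (i : ℕ) (θi : R.T i ⟶ T.T i) {Z A A' : C}
    (δ : Ext Z A) (δ' : Ext Z A')
    (y : (R.T i).obj (op A)) (y' : (R.T i).obj (op A'))
    (h : R.conn i δ y = R.conn i δ' y') :
    T.conn i δ (θi.app (op A) y) = T.conn i δ' (θi.app (op A') y') := by
  set u : (R.T i).obj (op (A ⊞ A')) :=
    (R.T i).map (biprod.fst : A ⊞ A' ⟶ A).op y +
    (R.T i).map (biprod.snd : A ⊞ A' ⟶ A').op (-y') with hu
  have hu0 : R.conn i (gam δ δ') u = 0 := by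
    rw [hu, conn_gam R i δ δ' y (-y'), (R.conn i δ').map_neg, h]
    exact add_neg_cancel _
  obtain ⟨M, kγ, pγ, hreal⟩ := Extriangulated.real_exists (gam δ δ')
  obtain ⟨w, hw⟩ := ((R.exact₂ i (gam δ δ') kγ pγ hreal) u).mp hu0
  have hθu : θi.app (op (A ⊞ A')) u
      = (T.T i).map (biprod.fst : A ⊞ A' ⟶ A).op (θi.app (op A) y)
      + (T.T i).map (biprod.snd : A ⊞ A' ⟶ A').op (θi.app (op A') (-y')) := by
    rw [hu, (θi.app (op (A ⊞ A'))).hom.map_add, nat_apply θi, nat_apply θi]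
  have hzero : T.conn i (gam δ δ') (θi.app (op (A ⊞ A')) u) = 0 := by
    rw [← hw, nat_apply θi]
    exact (T.exact₂ i (gam δ δ') kγ pγ hreal).apply_apply_eq_zero _
  have hmix := conn_gam T i δ δ' (θi.app (op A) y) (θi.app (op A') (-y'))
  rw [← hθu, hzero] at hmix
  rw [(θi.app (op A')).hom.map_neg, (T.conn i δ').map_neg] at hmix
  have h2 : T.conn i δ (θi.app (op A) y) - T.conn i δ' (θi.app (op A') y') = 0 := by
    rw [sub_eq_add_neg, ← hmix]
  exact sub_eq_zero.mp h2


lemma exists_data (R : RightDeltaFunctor C) (i : ℕ)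
    (eff : WeaklyEffaceable C (R.T (i+1))) {Z : C} (x : (R.T (i+1)).obj (op Z)) :
    ∃ (A : C) (δ : Ext Z A) (y : (R.T i).obj (op A)), R.conn i δ y = x := by
  obtain ⟨B, p, hdef, hkill⟩ := eff Z x
  obtain ⟨A, k, δ, hreal⟩ := hdef
  obtain ⟨y, hy⟩ := ((R.exact₃ i δ k p hreal) x).mp hkill
  exact ⟨A, δ, y, hy⟩

noncomputable def stepFun (T R : RightDeltaFunctor C) (i : ℕ)
    (eff : WeaklyEffaceable C (R.T (i+1))) (θi : R.T i ⟶ T.T i) {Z : C}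
    (x : (R.T (i+1)).obj (op Z)) : (T.T (i+1)).obj (op Z) :=
  T.conn i (exists_data R i eff x).choose_spec.choose
    (θi.app (op (exists_data R i eff x).choose)
      (exists_data R i eff x).choose_spec.choose_spec.choose)

lemma stepFun_spec (T R : RightDeltaFunctor C) (i : ℕ)
    (eff : WeaklyEffaceable C (R.T (i+1))) (θi : R.T i ⟶ T.T i) {Z A : C}
    (δ : Ext Z A) (y : (R.T i).obj (op A)) (x : (R.T (i+1)).obj (op Z))
    (hx : R.conn i δ y = x) :
    stepFun T R i eff θi x = T.conn i δ (θi.app (op A) y) := by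
  have hch := (exists_data R i eff x).choose_spec.choose_spec.choose_spec
  exact key T R i θi _ δ _ y (hch.trans hx.symm)

noncomputable def step (T R : RightDeltaFunctor C) (i : ℕ)
    (eff : WeaklyEffaceable C (R.T (i+1))) (θi : R.T i ⟶ T.T i) :
    R.T (i+1) ⟶ T.T (i+1) where
  app W := AddCommGrpCat.ofHom <| AddMonoidHom.mk' (fun x => stepFun T R i eff θi (Z := W.unop) x) (by
    intro x₁ x₂
    show stepFun T R i eff θi (x₁ + x₂) = stepFun T R i eff θi x₁ + stepFun T R i eff θi x₂
    obtain ⟨A₁, δ₁, y₁, h₁⟩ := exists_data R i eff (Z := W.unop) x₁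
    obtain ⟨A₂, δ₂, y₂, h₂⟩ := exists_data R i eff (Z := W.unop) x₂
    have hsum : R.conn i (gam δ₁ δ₂)
        ((R.T i).map (biprod.fst : A₁ ⊞ A₂ ⟶ A₁).op y₁ +
         (R.T i).map (biprod.snd : A₁ ⊞ A₂ ⟶ A₂).op y₂) = x₁ + x₂ := by
      rw [conn_gam R i δ₁ δ₂ y₁ y₂, h₁, h₂]
    rw [stepFun_spec T R i eff θi _ _ _ hsum,
        stepFun_spec T R i eff θi _ _ _ h₁, stepFun_spec T R i eff θi _ _ _ h₂,
        (θi.app (op (A₁ ⊞ A₂))).hom.map_add, nat_apply θi, nat_apply θi]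
    exact conn_gam T i δ₁ δ₂ _ _)
  naturality {W₁ W₂} f := by
    refine AddCommGrpCat.ext fun x => ?_
    show stepFun T R i eff θi ((R.T (i+1)).map f x)
        = (T.T (i+1)).map f (stepFun T R i eff θi x)
    obtain ⟨A, δ, y, hy⟩ := exists_data R i eff (Z := W₁.unop) x
    have hpush : push (𝟙 A) (pull f.unop δ) = pull f.unop δ := push_id _
    have hpullR : R.conn i (pull f.unop δ) y = (R.T (i+1)).map f x := by
      have h := R.conn_natural i (pull f.unop δ) δ (𝟙 A) f.unop hpush y
      simpa [hy] using h
    have hpullT : T.conn i (pull f.unop δ) (θi.app (op A) y)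
        = (T.T (i+1)).map f (T.conn i δ (θi.app (op A) y)) := by
      have h := T.conn_natural i (pull f.unop δ) δ (𝟙 A) f.unop hpush (θi.app (op A) y)
      simpa using h
    rw [stepFun_spec T R i eff θi _ _ _ hpullR, stepFun_spec T R i eff θi _ _ _ hy, hpullT]

end ExtProof2

open Extriangulated in
/-- If `(T, ε)` and `(R, η)` are right δ-functors on a (skeletally small) extriangulated
category such that `R^i` is weakly effaceable for all `i > 0`, then every morphism
`R^0 → T^0` extends uniquely to a morphism of right δ-functors `(R, η) → (T, ε)`. -/
theorem statement2 {C : Type u} [Category.{v} C] [Preadditive C]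
    [HasZeroObject C] [HasBinaryBiproducts C] [Extriangulated C]
    (T R : RightDeltaFunctor C)
    (hR : ∀ i, 0 < i → WeaklyEffaceable C (R.T i))
    (θ₀ : R.T 0 ⟶ T.T 0) :
    ∃! θ : ∀ i, R.T i ⟶ T.T i, θ 0 = θ₀ ∧ IsDeltaMorphism C R T θ := by
  classical
  set θ : ∀ i, R.T i ⟶ T.T i := fun i =>
    Nat.rec θ₀ (fun i θi => ExtProof2.step T R i (hR (i+1) (Nat.succ_pos i)) θi) i with hθ
  have hdm : IsDeltaMorphism C R T θ := by
    intro i A Z δ x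
    show (ExtProof2.step T R i (hR (i+1) (Nat.succ_pos i)) (θ i)).app (op Z) (R.conn i δ x)
        = T.conn i δ ((θ i).app (op A) x)
    show ExtProof2.stepFun T R i (hR (i+1) (Nat.succ_pos i)) (θ i) (R.conn i δ x)
        = T.conn i δ ((θ i).app (op A) x)
    exact ExtProof2.stepFun_spec T R i _ (θ i) δ x _ rfl
  refine ⟨θ, ⟨rfl, hdm⟩, ?_⟩
  rintro θ' ⟨h0, hdm'⟩
  funext i
  induction i with
  | zero => exact h0
  | succ i ih =>
    refine NatTrans.ext (funext fun W => ?_)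
    refine AddCommGrpCat.ext fun x => ?_
    obtain ⟨A, δ, y, hy⟩ :=
      ExtProof2.exists_data R i (hR (i+1) (Nat.succ_pos i)) (Z := W.unop) x
    have h1 := hdm' i δ y
    have h2 := hdm i δ y
    rw [ih] at h1
    rw [← hy]
    exact h1.trans h2.symm
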